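/- Let ρ > 0, let k, A₀ : ℝ → ℝ be continuously differentiable with k > 0 and A₀ > 0, and let A, Q be continuously differentiable stationary (time-independent) solutions with A > 0 of the inviscid (C_f = 0) variable-stiffness blood flow system. Then Q is constant and the quantity (Q/A)²/2 + (1/(√π ρ))k(x)√A(x) − (1/(√π ρ))k(x)√A₀(x) is constant in x. -/

import Mathlib

open Real

/-- For stationary inviscid solutions of the variable-stiffness blood flow system,
the discharge is constant and the generalized Bernoulli quantity
`(Q/A)²/2 + k√A/(√π ρ) − k√A₀/(√π ρ)` is constant. -/
theorem blood_flow_variable_stiffness_bernoulli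
    (ρ : ℝ) (hρ : 0 < ρ)
    (k A₀ : ℝ → ℝ) (hk : ContDiff ℝ 1 k) (hA₀ : ContDiff ℝ 1 A₀)
    (hkpos : ∀ x, 0 < k x) (hA₀pos : ∀ x, 0 < A₀ x)
    (A Q : ℝ → ℝ) (hA : ContDiff ℝ 1 A) (hQ : ContDiff ℝ 1 Q)
    (hApos : ∀ x, 0 < A x)
    (hQconst : ∀ x, deriv Q x = 0)
    (hmom : ∀ x,
      deriv (fun y => Q y ^ 2 / A y +
          k y / (3 * Real.sqrt π * ρ) * A y ^ (3 / 2 : ℝ)) x =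
      A x / (Real.sqrt π * ρ) *
          (deriv (fun y => k y * Real.sqrt (A₀ y)) x
            - 2 / 3 * Real.sqrt (A x) * deriv k x)) :
    (∃ Q₀ : ℝ, ∀ x, Q x = Q₀) ∧
      ∃ C : ℝ, ∀ x, (Q x / A x) ^ 2 / 2 +
        1 / (Real.sqrt π * ρ) * (k x * Real.sqrt (A x)) -
        1 / (Real.sqrt π * ρ) * (k x * Real.sqrt (A₀ x)) = C := by
  have hπ : (0:ℝ) < Real.sqrt π := Real.sqrt_pos.2 Real.pi_pos
  have hQc : ∀ x y, Q x = Q y :=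
    is_const_of_deriv_eq_zero (hQ.differentiable one_ne_zero) hQconst
  refine ⟨⟨Q 0, fun x => hQc x 0⟩, ?_⟩
  set E : ℝ → ℝ := fun x => (Q x / A x) ^ 2 / 2 +
        1 / (Real.sqrt π * ρ) * (k x * Real.sqrt (A x)) -
        1 / (Real.sqrt π * ρ) * (k x * Real.sqrt (A₀ x)) with hE
  have key : ∀ x, HasDerivAt E 0 x := by
    intro x
    have hAx := (hA.differentiable one_ne_zero x).hasDerivAt
    have hQx := (hQ.differentiable one_ne_zero x).hasDerivAt
    have hkx := (hk.differentiable one_ne_zero x).hasDerivAt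
    have hA₀x := (hA₀.differentiable one_ne_zero x).hasDerivAt
    have hane : A x ≠ 0 := (hApos x).ne'
    have hsA : HasDerivAt (fun y => Real.sqrt (A y))
        (deriv A x / (2 * Real.sqrt (A x))) x := hAx.sqrt hane
    have hsA₀ : HasDerivAt (fun y => Real.sqrt (A₀ y))
        (deriv A₀ x / (2 * Real.sqrt (A₀ x))) x := hA₀x.sqrt (hA₀pos x).ne'
    have hkA₀ : HasDerivAt (fun y => k y * Real.sqrt (A₀ y))
        (deriv k x * Real.sqrt (A₀ x) + k x * (deriv A₀ x / (2 * Real.sqrt (A₀ x)))) x :=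
      hkx.mul hsA₀
    -- the momentum LHS
    have h1 : HasDerivAt (fun y => Q y ^ 2 / A y)
        (((2:ℕ) * Q x ^ (2-1) * deriv Q x * A x - Q x ^ 2 * deriv A x) / A x ^ 2) x :=
      (hQx.pow 2).div hAx hane
    have h2 : HasDerivAt (fun y => k y / (3 * Real.sqrt π * ρ) * A y ^ (3/2 : ℝ))
        (deriv k x / (3 * Real.sqrt π * ρ) * A x ^ (3/2 : ℝ) +
          k x / (3 * Real.sqrt π * ρ) * (deriv A x * (3/2 : ℝ) * A x ^ ((3/2 : ℝ) - 1))) x :=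
      (hkx.div_const _).mul (hAx.rpow_const (Or.inl hane))
    have hL : deriv (fun y => Q y ^ 2 / A y +
        k y / (3 * Real.sqrt π * ρ) * A y ^ (3 / 2 : ℝ)) x = _ := (h1.add h2).deriv
    have H := hmom x
    rw [hL] at H
    rw [hkA₀.deriv] at H
    -- derivative of E
    have hEd : HasDerivAt E _ x := ((((hQx.div hAx hane).pow 2).div_const 2).add
        ((hkx.mul hsA).const_mul (1 / (Real.sqrt π * ρ)))).sub
        (hkA₀.const_mul (1 / (Real.sqrt π * ρ)))
    -- show the derivative is 0
    have hrpow : A x ^ (3/2 : ℝ) = A x * Real.sqrt (A x) := by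
      rw [show (3/2 : ℝ) = 1 + 1/2 by norm_num, Real.rpow_add (hApos x), Real.rpow_one,
        ← Real.sqrt_eq_rpow]
    have hrpow2 : A x ^ ((3/2 : ℝ) - 1) = Real.sqrt (A x) := by
      norm_num
      rw [← Real.sqrt_eq_rpow]
    have hs2 : Real.sqrt (A x) ^ 2 = A x := Real.sq_sqrt (hApos x).le
    have hsne : Real.sqrt (A x) ≠ 0 := (Real.sqrt_pos.2 (hApos x)).ne'
    rw [hrpow, hrpow2, hQconst x] at H
    convert hEd using 2
    rw [hQconst x]
    simp only [Pi.div_apply]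
    have hinv : A x * (A x)⁻¹ = 1 := mul_inv_cancel₀ hane
    have hvinv : Real.sqrt (A x) * (Real.sqrt (A x))⁻¹ = 1 := mul_inv_cancel₀ hsne
    linear_combination (-(1 / A x)) * H +
      (k x * deriv A x / (2 * (Real.sqrt π * ρ) * A x * Real.sqrt (A x))) * hs2 +
      (((Real.sqrt π)⁻¹ * ρ⁻¹) * (deriv k x * Real.sqrt (A x) - deriv k x * Real.sqrt (A₀ x)
        - k x * deriv A₀ x * (Real.sqrt (A₀ x))⁻¹ / 2
        + k x * deriv A x * (Real.sqrt (A x))⁻¹ / 2)) * hinv +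
      (-((A x)⁻¹ * (Real.sqrt π)⁻¹ * ρ⁻¹ * k x * deriv A x * Real.sqrt (A x) / 2)) * hvinv
  have hC : ∀ x y, E x = E y :=
    is_const_of_deriv_eq_zero (fun x => (key x).differentiableAt) (fun x => (key x).deriv)
  exact ⟨E 0, fun x => hC x 0⟩
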